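/- Let X be a geodesic metric space and let γ₁, γ₂ be quasi-geodesic rays in X with γ₁ Morse. Then γ₁ and γ₂ have finite Hausdorff distance if and only if there exists a constant C such that the intersection of the C-neighbourhood of γ₁ with the image of γ₂ is unbounded. -/

import Mathlib

open Set Metric

universe u

/-- `γ` restricted to `I` is a `(lam, eps)`-quasi-geodesic. -/
def IsQuasiGeodesicOn {X : Type*} [MetricSpace X] (γ : ℝ → X) (I : Set ℝ)
    (lam eps : ℝ) : Prop :=
  ∀ s ∈ I, ∀ t ∈ I,
    (1 / lam) * |s - t| - eps ≤ dist (γ s) (γ t) ∧ dist (γ s) (γ t) ≤ lam * |s - t| + eps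

/-- `γ` restricted to `I` is a (unit-speed) geodesic. -/
def IsGeodesicOn {X : Type*} [MetricSpace X] (γ : ℝ → X) (I : Set ℝ) : Prop :=
  ∀ s ∈ I, ∀ t ∈ I, dist (γ s) (γ t) = |s - t|

/-- A metric space is geodesic if any two points are joined by a geodesic. -/
def GeodesicSpace (X : Type*) [MetricSpace X] : Prop :=
  ∀ x y : X, ∃ γ : ℝ → X, γ 0 = x ∧ γ (dist x y) = y ∧ IsGeodesicOn γ (Icc 0 (dist x y))

/-- A Morse gauge: an increasing map `ℝ≥1 × ℝ≥0 → ℝ≥0`, continuous in the second argument. -/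
def IsMorseGauge (M : ℝ → ℝ → ℝ) : Prop :=
  (∀ l e, 1 ≤ l → 0 ≤ e → 0 ≤ M l e) ∧
  (∀ l l' e e', 1 ≤ l → 0 ≤ e → l ≤ l' → e ≤ e' → M l e ≤ M l' e') ∧
  (∀ l, 1 ≤ l → ContinuousOn (fun e => M l e) (Ici 0))

/-- Pointwise partial order on Morse gauges (on the domain `ℝ≥1 × ℝ≥0`). -/
def GaugeLE (M N : ℝ → ℝ → ℝ) : Prop :=
  ∀ l e, 1 ≤ l → 0 ≤ e → M l e ≤ N l e

/-- `γ` restricted to `I` is `M`-Morse: every continuous `(lam, eps)`-quasi-geodesic with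
endpoints on `γ` lies in the closed `M lam eps`-neighbourhood of `γ`. -/
def IsMorseWith {X : Type*} [MetricSpace X] (M : ℝ → ℝ → ℝ) (γ : ℝ → X) (I : Set ℝ) : Prop :=
  ∀ lam eps : ℝ, 1 ≤ lam → 0 ≤ eps →
    ∀ (η : ℝ → X) (a b : ℝ), a ≤ b →
      ContinuousOn η (Icc a b) → IsQuasiGeodesicOn η (Icc a b) lam eps →
      η a ∈ γ '' I → η b ∈ γ '' I →
      ∀ t ∈ Icc a b, ∃ s ∈ I, dist (η t) (γ s) ≤ M lam eps

/-- The constant `δ_M` associated to a Morse gauge `M`. -/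
def morseDelta (M : ℝ → ℝ → ℝ) : ℝ :=
  max (4 * M 1 (2 * M 5 0) + 2 * M 5 0) (8 * M 3 0)

section Helpers
variable {X : Type*} [MetricSpace X]

lemma qg_mono {γ : ℝ → X} {I : Set ℝ} {lam eps eps' : ℝ}
    (h : IsQuasiGeodesicOn γ I lam eps) (hle : eps ≤ eps') :
    IsQuasiGeodesicOn γ I lam eps' := by
  intro s hs t ht
  obtain ⟨h1, h2⟩ := h s hs t ht
  constructor <;> linarith

lemma geo_contOn {γ : ℝ → X} {I : Set ℝ} (h : IsGeodesicOn γ I) :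
    ContinuousOn γ I := by
  have : LipschitzOnWith 1 γ I := by
    apply LipschitzOnWith.of_dist_le_mul
    intro s hs t ht
    rw [h s hs t ht, Real.dist_eq]
    simp
  exact this.continuousOn

/-- from lower QG bound: parameter distance controlled by distance -/
lemma param_bound {γ : ℝ → X} {I : Set ℝ} {lam eps : ℝ}
    (h : IsQuasiGeodesicOn γ I lam eps) (hl : 1 ≤ lam)
    {s t : ℝ} (hs : s ∈ I) (ht : t ∈ I) :
    |s - t| ≤ lam * (dist (γ s) (γ t) + eps) := by
  have hlp : (0:ℝ) < lam := by linarith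
  have h1 := (h s hs t ht).1
  have h2 : lam * ((1 / lam) * |s - t| - eps) ≤ lam * dist (γ s) (γ t) :=
    mul_le_mul_of_nonneg_left h1 (le_of_lt hlp)
  have h3 : lam * ((1 / lam) * |s - t|) = |s - t| := by field_simp
  nlinarith [h2, h3]

/-- Extend a quasi-geodesic on `[a,b]` by a geodesic tail on `[b,c]` of length `≤ B`. -/
lemma concat_right {η : ℝ → X} {a b c lam eps B : ℝ}
    (hab : a ≤ b) (hbc : b ≤ c) (hl : 1 ≤ lam) (he : 0 ≤ eps)
    (hB : c - b ≤ B) (hB0 : 0 ≤ B)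
    (h1 : IsQuasiGeodesicOn η (Icc a b) lam eps)
    (h2 : IsGeodesicOn η (Icc b c)) :
    IsQuasiGeodesicOn η (Icc a c) lam (eps + 2 * B) := by
  have hlp : (0:ℝ) < lam := by linarith
  have hinv : 1 / lam ≤ 1 := by rw [div_le_one hlp]; linarith
  have hinvp : 0 < 1 / lam := by positivity
  have key : ∀ u v : ℝ, a ≤ u → u ≤ b → b ≤ v → v ≤ c →
      (1 / lam) * |u - v| - (eps + 2 * B) ≤ dist (η u) (η v) ∧
      dist (η u) (η v) ≤ lam * |u - v| + (eps + 2 * B) := by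
    intro u v hau hub hbv hvc
    have huv : u ≤ v := le_trans hub hbv
    have habs : |u - v| = v - u := by rw [abs_sub_comm]; exact abs_of_nonneg (by linarith)
    have h1abs : |u - b| = b - u := by rw [abs_sub_comm]; exact abs_of_nonneg (by linarith)
    obtain ⟨hlo, hhi⟩ := h1 u ⟨hau, hub⟩ b ⟨hab, le_refl b⟩
    have hd2 : dist (η b) (η v) = v - b := by
      rw [h2 b ⟨le_refl b, hbc⟩ v ⟨hbv, hvc⟩, abs_sub_comm]
      exact abs_of_nonneg (by linarith)
    have htri : dist (η u) (η v) ≤ dist (η u) (η b) + dist (η b) (η v) := dist_triangle _ _ _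
    have htri2 : dist (η u) (η b) ≤ dist (η u) (η v) + dist (η v) (η b) := dist_triangle _ _ _
    have hvb : dist (η v) (η b) = v - b := by rw [dist_comm]; exact hd2
    have hsplit : (1 / lam) * (v - u) = (1 / lam) * (b - u) + (1 / lam) * (v - b) := by ring
    have hfa : (1 / lam) * (v - b) ≤ v - b :=
      mul_le_of_le_one_left (by linarith) hinv
    have hlam : lam * (b - u) ≤ lam * (v - u) :=
      mul_le_mul_of_nonneg_left (by linarith) (le_of_lt hlp)
    rw [habs]; rw [h1abs] at hlo hhi
    constructor <;> linarith
  intro s hs t ht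
  rcases le_or_gt s b with hsb | hsb <;> rcases le_or_gt t b with htb | htb
  · obtain ⟨hlo, hhi⟩ := h1 s ⟨hs.1, hsb⟩ t ⟨ht.1, htb⟩
    constructor <;> linarith
  · exact key s t hs.1 hsb (le_of_lt htb) ht.2
  · have := key t s ht.1 htb (le_of_lt hsb) hs.2
    rw [dist_comm, abs_sub_comm] at this
    exact this
  · have hg := h2 s ⟨le_of_lt hsb, hs.2⟩ t ⟨le_of_lt htb, ht.2⟩
    rw [hg]
    have habs : 0 ≤ |s - t| := abs_nonneg _
    constructor <;> nlinarith [mul_le_of_le_one_left habs hinv, le_mul_of_one_le_left habs hl]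

/-- Extend a quasi-geodesic on `[b,c]` by a geodesic on `[a,b]` of length `≤ B`. -/
lemma concat_left {η : ℝ → X} {a b c lam eps B : ℝ}
    (hab : a ≤ b) (hbc : b ≤ c) (hl : 1 ≤ lam) (he : 0 ≤ eps)
    (hB : b - a ≤ B) (hB0 : 0 ≤ B)
    (h1 : IsGeodesicOn η (Icc a b))
    (h2 : IsQuasiGeodesicOn η (Icc b c) lam eps) :
    IsQuasiGeodesicOn η (Icc a c) lam (eps + 2 * B) := by
  have hlp : (0:ℝ) < lam := by linarith
  have hinv : 1 / lam ≤ 1 := by rw [div_le_one hlp]; linarith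
  have key : ∀ u v : ℝ, a ≤ u → u ≤ b → b ≤ v → v ≤ c →
      (1 / lam) * |u - v| - (eps + 2 * B) ≤ dist (η u) (η v) ∧
      dist (η u) (η v) ≤ lam * |u - v| + (eps + 2 * B) := by
    intro u v hau hub hbv hvc
    have huv : u ≤ v := le_trans hub hbv
    have habs : |u - v| = v - u := by rw [abs_sub_comm]; exact abs_of_nonneg (by linarith)
    have hbabs : |b - v| = v - b := by rw [abs_sub_comm]; exact abs_of_nonneg (by linarith)
    obtain ⟨hlo, hhi⟩ := h2 b ⟨le_refl b, hbc⟩ v ⟨hbv, hvc⟩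
    have hd1 : dist (η u) (η b) = b - u := by
      rw [h1 u ⟨hau, hub⟩ b ⟨hab, le_refl b⟩, abs_sub_comm]
      exact abs_of_nonneg (by linarith)
    have htri : dist (η u) (η v) ≤ dist (η u) (η b) + dist (η b) (η v) := dist_triangle _ _ _
    have htri2 : dist (η b) (η v) ≤ dist (η b) (η u) + dist (η u) (η v) := dist_triangle _ _ _
    have hbu : dist (η b) (η u) = b - u := by rw [dist_comm]; exact hd1
    have hsplit : (1 / lam) * (v - u) = (1 / lam) * (b - u) + (1 / lam) * (v - b) := by ring
    have hfa : (1 / lam) * (b - u) ≤ b - u :=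
      mul_le_of_le_one_left (by linarith) hinv
    have hlam : lam * (v - b) ≤ lam * (v - u) :=
      mul_le_mul_of_nonneg_left (by linarith) (le_of_lt hlp)
    rw [habs]; rw [hbabs] at hlo hhi
    constructor <;> linarith
  intro s hs t ht
  rcases le_or_gt s b with hsb | hsb <;> rcases le_or_gt t b with htb | htb
  · have hg := h1 s ⟨hs.1, hsb⟩ t ⟨ht.1, htb⟩
    rw [hg]
    have habs : 0 ≤ |s - t| := abs_nonneg _
    constructor <;> nlinarith [mul_le_of_le_one_left habs hinv, le_mul_of_one_le_left habs hl]
  · exact key s t hs.1 hsb (le_of_lt htb) ht.2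
  · have := key t s ht.1 htb (le_of_lt hsb) hs.2
    rw [dist_comm, abs_sub_comm] at this
    exact this
  · obtain ⟨hlo, hhi⟩ := h2 s ⟨le_of_lt hsb, hs.2⟩ t ⟨le_of_lt htb, ht.2⟩
    constructor <;> linarith

/-- Glue continuity on adjacent closed intervals. -/
lemma contOn_glue {f : ℝ → X} {a b c : ℝ}
    (h1 : ContinuousOn f (Icc a b)) (h2 : ContinuousOn f (Icc b c)) :
    ContinuousOn f (Icc a c) := by
  have hsub : Icc a c ⊆ Icc a b ∪ Icc b c := by
    intro x hx
    rcases le_or_gt x b with h | h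
    · exact Or.inl ⟨hx.1, h⟩
    · exact Or.inr ⟨le_of_lt h, hx.2⟩
  intro x hx
  have hu : ContinuousWithinAt f (Icc a b ∪ Icc b c) x := by
    have c1 : ContinuousWithinAt f (Icc a b) x := by
      by_cases h : x ∈ Icc a b
      · exact h1 x h
      · exact continuousWithinAt_of_notMem_closure (by rwa [isClosed_Icc.closure_eq])
    have c2 : ContinuousWithinAt f (Icc b c) x := by
      by_cases h : x ∈ Icc b c
      · exact h2 x h
      · exact continuousWithinAt_of_notMem_closure (by rwa [isClosed_Icc.closure_eq])
    exact c1.union c2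
  exact hu.mono hsub

end Helpers

theorem statement7 {X : Type u} [MetricSpace X] (hX : GeodesicSpace X)
    (γ₁ γ₂ : ℝ → X) (C₁ eps₁ C₂ eps₂ : ℝ) (M : ℝ → ℝ → ℝ)
    (hC₁ : 1 ≤ C₁) (he₁ : 0 ≤ eps₁) (hC₂ : 1 ≤ C₂) (he₂ : 0 ≤ eps₂)
    (hcont₁ : ContinuousOn γ₁ (Ici 0)) (hcont₂ : ContinuousOn γ₂ (Ici 0))
    (hqg₁ : IsQuasiGeodesicOn γ₁ (Ici 0) C₁ eps₁)
    (hqg₂ : IsQuasiGeodesicOn γ₂ (Ici 0) C₂ eps₂)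
    (hM : IsMorseGauge M) (hMorse : IsMorseWith M γ₁ (Ici 0)) :
    EMetric.hausdorffEdist (γ₁ '' Ici 0) (γ₂ '' Ici 0) ≠ ⊤ ↔
      ∃ C : ℝ, ¬ Bornology.IsBounded
        ((γ₂ '' Ici 0) ∩ {x | ∃ s ∈ Ici (0 : ℝ), dist x (γ₁ s) ≤ C}) := by
  have hC2p : (0:ℝ) < C₂ := by linarith
  have hC1p : (0:ℝ) < C₁ := by linarith
  constructor
  · -- forward direction
    intro h
    set H := EMetric.hausdorffEdist (γ₁ '' Ici 0) (γ₂ '' Ici 0) with hHdef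
    have hne2 : H + 1 ≠ ⊤ := by
      simp [ENNReal.add_ne_top, h]
    refine ⟨(H + 1).toReal, ?_⟩
    intro hbdd
    have hsubset : γ₂ '' Ici 0 ⊆ {x | ∃ s ∈ Ici (0:ℝ), dist x (γ₁ s) ≤ (H + 1).toReal} := by
      rintro x hx
      have h1 : EMetric.infEdist x (γ₁ '' Ici 0) ≤ H := by
        rw [hHdef]; show Metric.infEDist x _ ≤ Metric.hausdorffEDist _ _; rw [Metric.hausdorffEDist_comm]
        exact EMetric.infEdist_le_hausdorffEdist_of_mem hx
      have h2 : EMetric.infEdist x (γ₁ '' Ici 0) < H + 1 :=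
        lt_of_le_of_lt h1 (ENNReal.lt_add_right h one_ne_zero)
      change Metric.infEDist x _ < _ at h2; rw [EMetric.infEdist_lt_iff] at h2
      obtain ⟨y, hy, hxy⟩ := h2
      obtain ⟨s, hs, rfl⟩ := hy
      refine ⟨s, hs, ?_⟩
      rw [dist_edist]
      exact ENNReal.toReal_mono hne2 (le_of_lt hxy)
    rw [Set.inter_eq_self_of_subset_left hsubset] at hbdd
    obtain ⟨r, hr⟩ := hbdd.subset_closedBall (γ₂ 0)
    have hr0 : 0 ≤ r := by
      have := hr ⟨0, mem_Ici.2 (le_refl 0), rfl⟩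
      simpa using this
    set t := C₂ * (r + eps₂) + 1 with htdef
    have ht0 : (0:ℝ) ≤ t := by positivity
    have hmem : γ₂ t ∈ closedBall (γ₂ 0) r := hr ⟨t, ht0, rfl⟩
    have hlo := (hqg₂ t ht0 0 (mem_Ici.2 (le_refl 0))).1
    rw [sub_zero, abs_of_nonneg ht0] at hlo
    have hdle : dist (γ₂ t) (γ₂ 0) ≤ r := mem_closedBall.1 hmem
    have hC2inv : (1 / C₂) * t = r + eps₂ + 1 / C₂ := by
      rw [htdef]; field_simp
    rw [hC2inv] at hlo
    have : (0:ℝ) < 1 / C₂ := by positivity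
    linarith
  · -- backward direction
    rintro ⟨C, hC⟩
    have hgrow : ∀ R : ℝ, ∃ t : ℝ, 0 ≤ t ∧ (∃ s, 0 ≤ s ∧ dist (γ₂ t) (γ₁ s) ≤ C) ∧
        R < dist (γ₂ t) (γ₂ 0) := by
      intro R
      by_contra hcon
      push_neg at hcon
      apply hC
      apply (Metric.isBounded_closedBall (x := γ₂ 0) (r := R)).subset
      rintro x ⟨⟨t, ht, rfl⟩, hx2⟩
      simp only [mem_setOf_eq, mem_Ici] at hx2
      obtain ⟨s, hs, hxs⟩ := hx2
      exact mem_closedBall.2 (hcon t ht ⟨s, hs, hxs⟩)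
    have hC0 : (0:ℝ) ≤ C := by
      obtain ⟨t, ht, ⟨s, hs, hd⟩, -⟩ := hgrow 0
      exact le_trans dist_nonneg hd
    -- fixed bridge from γ₁ 0 to γ₂ 0
    obtain ⟨σ₀, hσ₀0, hσ₀1, hσ₀g⟩ := hX (γ₁ 0) (γ₂ 0)
    set d₀ := dist (γ₁ 0) (γ₂ 0) with hd₀def
    have hd₀0 : 0 ≤ d₀ := dist_nonneg
    set D := M C₂ (eps₂ + 2 * C + 2 * d₀) with hDdef
    have hD0 : 0 ≤ D := hM.1 _ _ hC₂ (by linarith)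
    -- STEP A: every point of γ₂ is within D of γ₁
    have hproj : ∀ u : ℝ, 0 ≤ u → ∃ s, 0 ≤ s ∧ dist (γ₂ u) (γ₁ s) ≤ D := by
      intro u hu
      obtain ⟨t, ht0, ⟨st, hst0, hstC⟩, hfar⟩ := hgrow (C₂ * u + eps₂)
      have hhi := (hqg₂ t ht0 0 (mem_Ici.2 (le_refl 0))).2
      rw [sub_zero, abs_of_nonneg ht0] at hhi
      have hut : u < t := by nlinarith
      have htpos : 0 < t := lt_of_le_of_lt hu hut
      obtain ⟨σ₁, hσ₁0, hσ₁1, hσ₁g⟩ := hX (γ₂ t) (γ₁ st)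
      set d₁ := dist (γ₂ t) (γ₁ st) with hd₁def
      have hd₁0 : 0 ≤ d₁ := dist_nonneg
      set η : ℝ → X := fun w => if w ≤ 0 then σ₀ (w + d₀) else if w ≤ t then γ₂ w
        else σ₁ (w - t) with hηdef
      have hvalL : ∀ w ∈ Icc (-d₀) 0, η w = σ₀ (w + d₀) := by
        intro w hw
        simp only [hηdef]
        rw [if_pos hw.2]
      have hvalM : ∀ w ∈ Icc 0 t, η w = γ₂ w := by
        intro w hw
        simp only [hηdef]
        by_cases h : w ≤ 0
        · have hw0 : w = 0 := le_antisymm h hw.1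
          rw [if_pos h, hw0, zero_add, hσ₀1]
        · rw [if_neg h, if_pos hw.2]
      have hvalR : ∀ w ∈ Icc t (t + d₁), η w = σ₁ (w - t) := by
        intro w hw
        simp only [hηdef]
        by_cases h : w ≤ t
        · have hwt : w = t := le_antisymm h hw.1
          rw [if_neg (by rw [hwt]; exact not_le.2 htpos), if_pos h, hwt, sub_self]
          exact hσ₁0.symm
        · rw [if_neg (by push_neg at h ⊢; exact lt_trans htpos h), if_neg h]
      have hgeoL : IsGeodesicOn η (Icc (-d₀) 0) := by
        intro w hw w' hw'
        rw [hvalL w hw, hvalL w' hw',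
          hσ₀g (w + d₀) ⟨by linarith [hw.1], by linarith [hw.2]⟩
            (w' + d₀) ⟨by linarith [hw'.1], by linarith [hw'.2]⟩]
        congr 1; ring
      have hgeoR : IsGeodesicOn η (Icc t (t + d₁)) := by
        intro w hw w' hw'
        rw [hvalR w hw, hvalR w' hw',
          hσ₁g (w - t) ⟨by linarith [hw.1], by linarith [hw.2]⟩
            (w' - t) ⟨by linarith [hw'.1], by linarith [hw'.2]⟩]
        congr 1; ring
      have hqgM : IsQuasiGeodesicOn η (Icc 0 t) C₂ eps₂ := by
        intro w hw w' hw'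
        rw [hvalM w hw, hvalM w' hw']
        exact hqg₂ w hw.1 w' hw'.1
      have hqg1 : IsQuasiGeodesicOn η (Icc 0 (t + d₁)) C₂ (eps₂ + 2 * C) :=
        concat_right (le_refl 0 |>.trans (le_of_lt htpos)) (by linarith) hC₂ he₂
          (by linarith) hC0 hqgM hgeoR
      have hqg2 : IsQuasiGeodesicOn η (Icc (-d₀) (t + d₁)) C₂ (eps₂ + 2 * C + 2 * d₀) :=
        concat_left (by linarith) (by linarith) hC₂ (by linarith)
          (by linarith) hd₀0 hgeoL hqg1
      have hcontη : ContinuousOn η (Icc (-d₀) (t + d₁)) := by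
        apply contOn_glue (b := t)
        · apply contOn_glue (b := 0)
          · exact (geo_contOn hgeoL)
          · exact ((hcont₂.mono (Icc_subset_Ici_self)).congr hvalM)
        · exact geo_contOn hgeoR
      have he1 : η (-d₀) ∈ γ₁ '' Ici 0 := by
        refine ⟨0, mem_Ici.2 (le_refl 0), ?_⟩
        rw [hvalL (-d₀) ⟨le_refl _, by linarith⟩, neg_add_cancel, hσ₀0]
      have he2 : η (t + d₁) ∈ γ₁ '' Ici 0 := by
        refine ⟨st, hst0, ?_⟩
        rw [hvalR (t + d₁) ⟨by linarith, le_refl _⟩, add_sub_cancel_left, hσ₁1]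
      obtain ⟨s, hs, hds⟩ := hMorse C₂ (eps₂ + 2 * C + 2 * d₀) hC₂ (by linarith)
        η (-d₀) (t + d₁) (by linarith) hcontη hqg2 he1 he2 u ⟨by linarith, by linarith⟩
      refine ⟨s, hs, ?_⟩
      rwa [hvalM u ⟨hu, le_of_lt hut⟩] at hds
    -- choose a projection function
    have hproj' : ∀ u : ℝ, ∃ s, 0 ≤ s ∧ (0 ≤ u → dist (γ₂ u) (γ₁ s) ≤ D) := by
      intro u
      by_cases hu : 0 ≤ u
      · obtain ⟨s, h1, h2⟩ := hproj u hu
        exact ⟨s, h1, fun _ => h2⟩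
      · exact ⟨0, le_refl 0, fun h => absurd h hu⟩
    choose p hp0 hpD using hproj'
    -- coarse continuity of p
    set J := C₁ * (2 * D + 2 * C₂ + eps₂ + eps₁) with hJdef
    have hJ0 : 0 ≤ J := by positivity
    have hcoarse : ∀ u v : ℝ, 0 ≤ u → 0 ≤ v → |u - v| ≤ 2 → |p u - p v| ≤ J := by
      intro u v hu hv huv
      have h1 : dist (γ₁ (p u)) (γ₁ (p v)) ≤ 2 * D + 2 * C₂ + eps₂ := by
        have t1 : dist (γ₁ (p u)) (γ₁ (p v)) ≤
            dist (γ₁ (p u)) (γ₂ u) + dist (γ₂ u) (γ₂ v) + dist (γ₂ v) (γ₁ (p v)) :=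
          dist_triangle4 _ _ _ _
        have t2 : dist (γ₁ (p u)) (γ₂ u) ≤ D := by rw [dist_comm]; exact hpD u hu
        have t3 : dist (γ₂ v) (γ₁ (p v)) ≤ D := hpD v hv
        have t4 := (hqg₂ u hu v hv).2
        have t5 : C₂ * |u - v| ≤ C₂ * 2 := mul_le_mul_of_nonneg_left huv (le_of_lt hC2p)
        linarith
      have h2 := param_bound hqg₁ hC₁ (hp0 u) (hp0 v)
      have h3 : C₁ * (dist (γ₁ (p u)) (γ₁ (p v)) + eps₁) ≤ J := by
        rw [hJdef]
        apply mul_le_mul_of_nonneg_left _ (le_of_lt hC1p)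
        linarith
      linarith
    set K := C₁ * (D + C + eps₁) with hKdef
    have hK0 : 0 ≤ K := by positivity
    set A₀ := C₁ * (D + d₀ + eps₁) with hA₀def
    have hA₀0 : 0 ≤ A₀ := by positivity
    have hp0A : p 0 ≤ A₀ := by
      have h1 : dist (γ₁ (p 0)) (γ₁ 0) ≤ D + d₀ := by
        have t1 : dist (γ₁ (p 0)) (γ₁ 0) ≤ dist (γ₁ (p 0)) (γ₂ 0) + dist (γ₂ 0) (γ₁ 0) :=
          dist_triangle _ _ _
        have t2 : dist (γ₁ (p 0)) (γ₂ 0) ≤ D := by rw [dist_comm]; exact hpD 0 (le_refl 0)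
        have t3 : dist (γ₂ 0) (γ₁ 0) = d₀ := dist_comm _ _
        linarith
      have h2 := param_bound hqg₁ hC₁ (hp0 0) (le_refl (0:ℝ) : (0:ℝ) ∈ Ici (0:ℝ))
      rw [sub_zero] at h2
      have h3 : p 0 ≤ |p 0| := le_abs_self _
      have h4 : C₁ * (dist (γ₁ (p 0)) (γ₁ 0) + eps₁) ≤ A₀ := by
        rw [hA₀def]
        apply mul_le_mul_of_nonneg_left _ (le_of_lt hC1p)
        linarith
      linarith
    -- STEP B: every point of γ₁ is within E of γ₂
    set E := max (C₁ * A₀ + eps₁ + d₀) (C₁ * J + eps₁ + D) with hEdef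
    have hside1 : ∀ s : ℝ, 0 ≤ s → ∃ u, 0 ≤ u ∧ dist (γ₁ s) (γ₂ u) ≤ E := by
      intro s hs
      rcases lt_or_ge s A₀ with hsA | hsA
      · refine ⟨0, le_refl 0, ?_⟩
        have t1 : dist (γ₁ s) (γ₂ 0) ≤ dist (γ₁ s) (γ₁ 0) + dist (γ₁ 0) (γ₂ 0) :=
          dist_triangle _ _ _
        have t2 := (hqg₁ s hs 0 (mem_Ici.2 (le_refl 0))).2
        rw [sub_zero, abs_of_nonneg hs] at t2
        have t3 : C₁ * s ≤ C₁ * A₀ := mul_le_mul_of_nonneg_left (le_of_lt hsA) (le_of_lt hC1p)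
        have : dist (γ₁ s) (γ₂ 0) ≤ C₁ * A₀ + eps₁ + d₀ := by linarith
        exact le_trans this (le_max_left _ _)
      · obtain ⟨t, ht0, ⟨st, hst0, hstC⟩, hfar⟩ := hgrow (C₁ * (s + K) + eps₁ + C + d₀)
        -- st > s + K
        have hst : s + K < st := by
          have t1 : dist (γ₂ t) (γ₂ 0) ≤
              dist (γ₂ t) (γ₁ st) + dist (γ₁ st) (γ₁ 0) + dist (γ₁ 0) (γ₂ 0) :=
            dist_triangle4 _ _ _ _
          have t2 := (hqg₁ st hst0 0 (mem_Ici.2 (le_refl 0))).2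
          rw [sub_zero, abs_of_nonneg hst0] at t2
          have : C₁ * (s + K) < C₁ * st := by linarith
          exact lt_of_mul_lt_mul_left this (le_of_lt hC1p)
        -- p t > s
        have hpt : s < p t := by
          have h1 : dist (γ₁ (p t)) (γ₁ st) ≤ D + C := by
            have t1 : dist (γ₁ (p t)) (γ₁ st) ≤
                dist (γ₁ (p t)) (γ₂ t) + dist (γ₂ t) (γ₁ st) := dist_triangle _ _ _
            have t2 : dist (γ₁ (p t)) (γ₂ t) ≤ D := by rw [dist_comm]; exact hpD t ht0
            linarith
          have h2 := param_bound hqg₁ hC₁ (hp0 t) hst0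
          have h3 : C₁ * (dist (γ₁ (p t)) (γ₁ st) + eps₁) ≤ K := by
            rw [hKdef]
            apply mul_le_mul_of_nonneg_left _ (le_of_lt hC1p)
            linarith
          have h4 : st - p t ≤ |p t - st| := by
            rw [abs_sub_comm]; exact le_abs_self _
          linarith
        set Sset := {u : ℝ | u ∈ Icc 0 t ∧ p u ≤ s} with hSdef
        have h0S : (0:ℝ) ∈ Sset := ⟨⟨le_refl 0, ht0⟩, le_trans hp0A hsA⟩
        have hSne : Sset.Nonempty := ⟨0, h0S⟩
        have hbddS : BddAbove Sset := ⟨t, fun u hu => hu.1.2⟩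
        set u₀ := sSup Sset with hu₀def
        have hu₀t : u₀ ≤ t := csSup_le hSne (fun u hu => hu.1.2)
        have hu₀0 : 0 ≤ u₀ := le_csSup hbddS h0S
        obtain ⟨u, huS, hu1⟩ := exists_lt_of_lt_csSup hSne (show u₀ - 1 < u₀ by linarith)
        have huu₀ : u ≤ u₀ := le_csSup hbddS huS
        set v := min (u₀ + 1) t with hvdef
        have hvI : v ∈ Icc 0 t := ⟨le_min (by linarith) ht0, min_le_right _ _⟩
        have huv : u ≤ v := le_min (by linarith) huS.1.2
        have hvu2 : v ≤ u + 2 := le_trans (min_le_left _ _) (by linarith)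
        have hpv : s < p v := by
          by_contra hle
          push_neg at hle
          have hvS : v ∈ Sset := ⟨hvI, hle⟩
          have hvle : v ≤ u₀ := le_csSup hbddS hvS
          rcases min_choice (u₀ + 1) t with h | h
          · rw [hvdef] at hvle; rw [h] at hvle; linarith
          · rw [hvdef] at hle; rw [h] at hle; linarith
        have hJ2 : |p u - p v| ≤ J :=
          hcoarse u v huS.1.1 hvI.1 (by rw [abs_sub_comm, abs_of_nonneg (by linarith)]; linarith)
        have hsp : |s - p u| ≤ J := by
          have h1 : p u ≤ s := huS.2
          have h2 : p v - p u ≤ |p u - p v| := by rw [abs_sub_comm]; exact le_abs_self _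
          rw [abs_of_nonneg (by linarith)]
          linarith
        refine ⟨u, huS.1.1, ?_⟩
        have t1 : dist (γ₁ s) (γ₂ u) ≤ dist (γ₁ s) (γ₁ (p u)) + dist (γ₁ (p u)) (γ₂ u) :=
          dist_triangle _ _ _
        have t2 := (hqg₁ s hs (p u) (hp0 u)).2
        have t3 : C₁ * |s - p u| ≤ C₁ * J := mul_le_mul_of_nonneg_left hsp (le_of_lt hC1p)
        have t4 : dist (γ₁ (p u)) (γ₂ u) ≤ D := by rw [dist_comm]; exact hpD u huS.1.1
        have : dist (γ₁ s) (γ₂ u) ≤ C₁ * J + eps₁ + D := by linarith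
        exact le_trans this (le_max_right _ _)
    -- conclude the Hausdorff distance is finite
    set R := max D E with hRdef
    apply ne_top_of_le_ne_top (ENNReal.ofReal_ne_top (r := R))
    apply EMetric.hausdorffEdist_le_of_infEdist
    · rintro x ⟨s, hs, rfl⟩
      obtain ⟨u, hu, hdu⟩ := hside1 s hs
      calc EMetric.infEdist (γ₁ s) (γ₂ '' Ici 0) ≤ edist (γ₁ s) (γ₂ u) :=
            EMetric.infEdist_le_edist_of_mem ⟨u, hu, rfl⟩
        _ ≤ ENNReal.ofReal R := by
            rw [edist_dist]
            exact ENNReal.ofReal_le_ofReal (le_trans hdu (le_max_right _ _))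
    · rintro x ⟨u, hu, rfl⟩
      obtain ⟨s, hs, hds⟩ := hproj u hu
      calc EMetric.infEdist (γ₂ u) (γ₁ '' Ici 0) ≤ edist (γ₂ u) (γ₁ s) :=
            EMetric.infEdist_le_edist_of_mem ⟨s, hs, rfl⟩
        _ ≤ ENNReal.ofReal R := by
            rw [edist_dist]
            exact ENNReal.ofReal_le_ofReal (le_trans hds (le_max_left _ _))
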